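/- arXiv:0909.5366 — 2 statements merged into one kernel-verified Lean document; each statement's English description precedes it below -/
import Mathlib

section
/- For any measurable estimator of the mean θ̂ : ℝⁿ → ℝ, any variance value v > 0, and any deviation level η > 0, there exists a mean m ∈ ℝ such that, if (Y_i)_{i=1}^n is an i.i.d. sample drawn from the Gaussian distribution N(m, v), then P(θ̂(Y₁,…,Y_n) ≥ m + η) ≥ P(M ≥ m + η) or P(θ̂(Y₁,…,Y_n) ≤ m − η) ≥ P(M ≤ m − η), where M = (1/n) Σ_{i=1}^n Y_i is the empirical mean. -/
open MeasureTheory ProbabilityTheory Real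

private lemma piFinSuccAbove_zero_apply {k : ℕ} (x : Fin (k+1) → ℝ) :
    (MeasurableEquiv.piFinSuccAbove (fun _ => ℝ) 0) x = (x 0, fun j => x j.succ) := by
  simp [MeasurableEquiv.piFinSuccAbove_apply]
  rfl

private lemma lintegral_pi_prod : ∀ {n : ℕ} (μ : Fin n → Measure ℝ),
    (∀ i, SigmaFinite (μ i)) → ∀ (f : Fin n → ℝ → ENNReal), (∀ i, Measurable (f i)) →
    ∫⁻ x, ∏ i, f i (x i) ∂Measure.pi μ = ∏ i, ∫⁻ t, f i t ∂μ i := by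
  intro n
  induction n with
  | zero =>
    intro μ _ f _
    simp [Measure.pi_of_empty]
  | succ k ih =>
    intro μ hμ f hf
    have := hμ
    have hmp := measurePreserving_piFinSuccAbove μ 0
    have hg : Measurable fun y : Fin k → ℝ => ∏ j : Fin k, f j.succ (y j) :=
      Finset.measurable_prod _ fun j _ => (hf j.succ).comp (measurable_pi_apply j)
    have hF : Measurable fun p : ℝ × (Fin k → ℝ) =>
        f 0 p.1 * ∏ j : Fin k, f j.succ (p.2 j) :=
      ((hf 0).comp measurable_fst).mul (hg.comp measurable_snd)
    have key : ∫⁻ x, ∏ i, f i (x i) ∂Measure.pi μ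
        = ∫⁻ p : ℝ × (Fin k → ℝ), f 0 p.1 * ∏ j : Fin k, f j.succ (p.2 j)
            ∂((μ 0).prod (Measure.pi fun j => μ ((0 : Fin (k+1)).succAbove j))) := by
      rw [← hmp.lintegral_comp hF]
      congr 1
      funext x
      rw [piFinSuccAbove_zero_apply x]
      exact Fin.prod_univ_succ _
    rw [key, lintegral_prod_mul (f := fun t => f 0 t)
      (g := fun y : Fin k → ℝ => ∏ j : Fin k, f j.succ (y j))
      (hf 0).aemeasurable hg.aemeasurable]
    have := ih (fun j => μ ((0 : Fin (k+1)).succAbove j)) (fun j => hμ _)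
      (fun j => f j.succ) (fun j => hf j.succ)
    simp only [Fin.zero_succAbove] at this ⊢
    rw [this, Fin.prod_univ_succ]

private lemma pi_gaussian_eq {n : ℕ} (m : ℝ) {v : NNReal} (hv : v ≠ 0) :
    (Measure.pi fun _ : Fin n => gaussianReal m v) =
      (Measure.pi fun _ : Fin n => (volume : Measure ℝ)).withDensity
        (fun x => ∏ i, gaussianPDF m v (x i)) := by
  apply Measure.pi_eq
  intro s hs
  have hbox : MeasurableSet (Set.pi Set.univ s) := MeasurableSet.univ_pi hs
  rw [withDensity_apply _ hbox, ← lintegral_indicator hbox]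
  have hind : (Set.pi Set.univ s).indicator (fun x => ∏ i, gaussianPDF m v (x i))
      = fun x => ∏ i, (s i).indicator (gaussianPDF m v) (x i) := by
    funext x
    by_cases hx : x ∈ Set.pi Set.univ s
    · rw [Set.indicator_of_mem hx]
      exact Finset.prod_congr rfl fun i _ =>
        (Set.indicator_of_mem (hx i (Set.mem_univ i)) _).symm
    · rw [Set.indicator_of_notMem hx]
      have : ∃ j, x j ∉ s j := by
        by_contra hcon
        push_neg at hcon
        exact hx fun i _ => hcon i
      obtain ⟨j, hj⟩ := this
      exact (Finset.prod_eq_zero (Finset.mem_univ j)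
        (Set.indicator_of_notMem hj _)).symm
  rw [hind, lintegral_pi_prod _ (fun _ => inferInstance) _
    (fun i => (measurable_gaussianPDF m v).indicator (hs i))]
  refine Finset.prod_congr rfl fun i _ => ?_
  rw [lintegral_indicator (hs i), gaussianReal_of_var_ne_zero m hv,
    withDensity_apply _ (hs i)]

private lemma prod_pdf_le {n : ℕ} {v : NNReal} {m₁ m₂ : ℝ} {x : Fin n → ℝ}
    (h : ∑ i, (-(x i - m₁)^2) ≤ ∑ i, (-(x i - m₂)^2)) :
    ∏ i, gaussianPDF m₁ v (x i) ≤ ∏ i, gaussianPDF m₂ v (x i) := by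
  simp only [gaussianPDF_def]
  rw [← ENNReal.ofReal_prod_of_nonneg (fun i _ => gaussianPDFReal_nonneg m₁ v (x i)),
    ← ENNReal.ofReal_prod_of_nonneg (fun i _ => gaussianPDFReal_nonneg m₂ v (x i))]
  refine ENNReal.ofReal_le_ofReal ?_
  simp only [gaussianPDFReal]
  rw [Finset.prod_mul_distrib, Finset.prod_mul_distrib, ← Real.exp_sum, ← Real.exp_sum]
  refine mul_le_mul_of_nonneg_left ?_ (by positivity)
  rw [Real.exp_le_exp, ← Finset.sum_div, ← Finset.sum_div]
  gcongr

private lemma measure_pi_gaussian_mono {n : ℕ} {v : NNReal} (hv : v ≠ 0) {m₁ m₂ : ℝ}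
    {E : Set (Fin n → ℝ)} (hE : MeasurableSet E)
    (h : ∀ x ∈ E, ∑ i, (-(x i - m₁)^2) ≤ ∑ i, (-(x i - m₂)^2)) :
    (Measure.pi fun _ : Fin n => gaussianReal m₁ v) E ≤
      (Measure.pi fun _ : Fin n => gaussianReal m₂ v) E := by
  rw [pi_gaussian_eq m₁ hv, pi_gaussian_eq m₂ hv, withDensity_apply _ hE,
    withDensity_apply _ hE]
  exact setLIntegral_mono (Finset.measurable_prod _ fun i _ =>
    (measurable_gaussianPDF m₂ v).comp (measurable_pi_apply i))
    (fun x hx => prod_pdf_le (h x hx))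

private lemma volume_pi_sum_eq_zero (k : ℕ) (c : ℝ) :
    (Measure.pi fun _ : Fin (k+1) => (volume : Measure ℝ)) {x | ∑ i, x i = c} = 0 := by
  have hmp := measurePreserving_piFinSuccAbove (fun _ : Fin (k+1) => (volume : Measure ℝ)) 0
  have hS : MeasurableSet {p : ℝ × (Fin k → ℝ) | p.1 + ∑ j, p.2 j = c} := by
    have : Measurable fun p : ℝ × (Fin k → ℝ) => p.1 + ∑ j, p.2 j :=
      measurable_fst.add (Finset.measurable_sum _ fun j _ =>
        (measurable_pi_apply j).comp measurable_snd)
    exact this (measurableSet_singleton c)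
  have hpre : {x : Fin (k+1) → ℝ | ∑ i, x i = c} =
      (MeasurableEquiv.piFinSuccAbove (fun _ => ℝ) 0) ⁻¹'
        {p : ℝ × (Fin k → ℝ) | p.1 + ∑ j, p.2 j = c} := by
    ext x
    simp only [Set.mem_setOf_eq, Set.mem_preimage, piFinSuccAbove_zero_apply]
    rw [Fin.sum_univ_succ]
  rw [hpre, hmp.measure_preimage hS.nullMeasurableSet, Measure.prod_apply_symm hS]
  have hsec : ∀ y : Fin k → ℝ, (volume : Measure ℝ) {a : ℝ | a + ∑ j, y j = c} = 0 := by
    intro y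
    have : {a : ℝ | a + ∑ j, y j = c} = {c - ∑ j, y j} := by
      ext a
      simp only [Set.mem_setOf_eq, Set.mem_singleton_iff]
      constructor <;> intro h <;> linarith
    rw [this]
    exact measure_singleton _
  simp only [Set.preimage_setOf_eq]
  simp [hsec]

/-- Proposition (the empirical mean is minimax for Gaussian samples): for any measurable
estimator `θ̂ : ℝⁿ → ℝ`, any variance `v > 0` and any deviation level `η > 0`, there is a
mean `m` such that, for an i.i.d. sample of size `n` from `N(m, v)`,
`P(θ̂ ≥ m + η) ≥ P(M ≥ m + η)` or `P(θ̂ ≤ m - η) ≥ P(M ≤ m - η)`, where `M` is the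
empirical mean. -/
theorem gaussian_empirical_mean_minimax
    (n : ℕ) (hn : 0 < n)
    (est : (Fin n → ℝ) → ℝ) (hest : Measurable est)
    (v : NNReal) (hv : 0 < v) (η : ℝ) (hη : 0 < η) :
    ∃ m : ℝ,
      (Measure.pi fun _ : Fin n => gaussianReal m v) {y | m + η ≤ est y} ≥
        (Measure.pi fun _ : Fin n => gaussianReal m v) {y | m + η ≤ (1 / n) * ∑ i, y i} ∨
      (Measure.pi fun _ : Fin n => gaussianReal m v) {y | est y ≤ m - η} ≥
        (Measure.pi fun _ : Fin n => gaussianReal m v) {y | (1 / n) * ∑ i, y i ≤ m - η} := by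
  obtain ⟨k, rfl⟩ : ∃ k, n = k + 1 := ⟨n - 1, (Nat.succ_pred_eq_of_pos hn).symm⟩
  by_contra hcon
  push_neg at hcon
  obtain ⟨h1, -⟩ := hcon 0
  obtain ⟨-, h2⟩ := hcon (2 * η)
  have hNpos : (0 : ℝ) < ((k + 1 : ℕ) : ℝ) := by positivity
  set P0 : Measure (Fin (k+1) → ℝ) := Measure.pi fun _ : Fin (k+1) => gaussianReal 0 v with hP0
  set P2 : Measure (Fin (k+1) → ℝ) :=
    Measure.pi fun _ : Fin (k+1) => gaussianReal (2 * η) v with hP2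
  set B : Set (Fin (k+1) → ℝ) := {y | 0 + η ≤ est y} with hBdef
  set C : Set (Fin (k+1) → ℝ) := {y | 0 + η ≤ (1 / ((k+1 : ℕ) : ℝ)) * ∑ i, y i} with hCdef
  set D : Set (Fin (k+1) → ℝ) := {y | est y ≤ 2 * η - η} with hDdef
  set C' : Set (Fin (k+1) → ℝ) :=
    {y | (1 / ((k+1 : ℕ) : ℝ)) * ∑ i, y i ≤ 2 * η - η} with hC'def
  have hSmeas : Measurable fun y : Fin (k+1) → ℝ => ∑ i, y i :=
    Finset.measurable_sum _ fun i _ => measurable_pi_apply i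
  have hB : MeasurableSet B := measurableSet_le measurable_const hest
  have hC : MeasurableSet C := measurableSet_le measurable_const (hSmeas.const_mul _)
  have hCmem : ∀ y : Fin (k+1) → ℝ, y ∈ C ↔ ((k+1 : ℕ) : ℝ) * η ≤ ∑ i, y i := by
    intro y
    rw [hCdef, Set.mem_setOf_eq, zero_add, one_div, inv_mul_eq_div, le_div_iff₀ hNpos,
      mul_comm]
  have hC'mem : ∀ y : Fin (k+1) → ℝ, y ∈ C' ↔ ∑ i, y i ≤ ((k+1 : ℕ) : ℝ) * η := by
    intro y
    rw [hC'def, Set.mem_setOf_eq, show (2 : ℝ) * η - η = η by ring, one_div, inv_mul_eq_div,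
      div_le_iff₀ hNpos, mul_comm]
  have hZ0 : P2 {y : Fin (k+1) → ℝ | ∑ i, y i = ((k+1 : ℕ) : ℝ) * η} = 0 := by
    rw [hP2, pi_gaussian_eq _ hv.ne']
    exact (withDensity_absolutelyContinuous _ _)
      (volume_pi_sum_eq_zero k (((k+1 : ℕ) : ℝ) * η))
  have expand : ∀ x : Fin (k+1) → ℝ, ∑ i, (-(x i - 2 * η) ^ 2) - ∑ i, (-(x i - 0) ^ 2)
      = 4 * η * (∑ i, x i) - ((k+1 : ℕ) : ℝ) * (4 * η ^ 2) := by
    intro x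
    rw [← Finset.sum_sub_distrib,
      Finset.sum_congr rfl
        (fun i _ => show -(x i - 2 * η) ^ 2 - -(x i - 0) ^ 2 = 4 * η * x i - 4 * η ^ 2 by ring),
      Finset.sum_sub_distrib, ← Finset.mul_sum, Finset.sum_const, Finset.card_univ,
      Fintype.card_fin, nsmul_eq_mul]
  have hup : ∀ x : Fin (k+1) → ℝ, ((k+1 : ℕ) : ℝ) * η ≤ ∑ i, x i →
      ∑ i, (-(x i - 0) ^ 2) ≤ ∑ i, (-(x i - 2 * η) ^ 2) := by
    intro x hx
    have := expand x
    nlinarith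
  have hdown : ∀ x : Fin (k+1) → ℝ, ∑ i, x i ≤ ((k+1 : ℕ) : ℝ) * η →
      ∑ i, (-(x i - 2 * η) ^ 2) ≤ ∑ i, (-(x i - 0) ^ 2) := by
    intro x hx
    have := expand x
    nlinarith
  have c1 : P0 (C \ B) ≤ P2 (C \ B) :=
    measure_pi_gaussian_mono hv.ne' (hC.diff hB)
      (fun x hx => hup x ((hCmem x).mp hx.1))
  have c2 : P2 (Cᶜ ∩ B) ≤ P0 (Cᶜ ∩ B) :=
    measure_pi_gaussian_mono hv.ne' (hC.compl.inter hB)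
      (fun x hx => hdown x (le_of_lt (by
        have h' := hx.1
        rw [Set.mem_compl_iff, hCmem x] at h'
        exact lt_of_not_ge h')))
  have e1 : P0 (C ∩ B) + P0 (C \ B) = P0 C := measure_inter_add_diff C hB
  have e2 : P2 (Cᶜ ∩ B) + P2 (Cᶜ \ B) = P2 Cᶜ := measure_inter_add_diff Cᶜ hB
  have e3 : P0 (B ∩ C) + P0 (B \ C) = P0 B := measure_inter_add_diff B hC
  have e4 : P2 (Bᶜ ∩ C) + P2 (Bᶜ \ C) = P2 Bᶜ := measure_inter_add_diff Bᶜ hC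
  have i1 : C ∩ B = B ∩ C := Set.inter_comm _ _
  have i2 : C \ B = Bᶜ ∩ C := by rw [Set.diff_eq, Set.inter_comm]
  have i3 : Cᶜ ∩ B = B \ C := by rw [Set.diff_eq, Set.inter_comm]
  have i4 : Cᶜ \ B = Bᶜ \ C := by rw [Set.diff_eq, Set.diff_eq, Set.inter_comm]
  have hC'le : P2 C' ≤ P2 Cᶜ := by
    have hsub : C' ⊆ Cᶜ ∪ {y : Fin (k+1) → ℝ | ∑ i, y i = ((k+1 : ℕ) : ℝ) * η} := by
      intro y hy
      rcases lt_or_eq_of_le ((hC'mem y).mp hy) with h | h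
      · left
        rw [Set.mem_compl_iff, hCmem y]
        exact not_le.mpr h
      · right
        exact h
    calc P2 C' ≤ P2 (Cᶜ ∪ {y : Fin (k+1) → ℝ | ∑ i, y i = ((k+1 : ℕ) : ℝ) * η}) :=
          measure_mono hsub
      _ ≤ P2 Cᶜ + P2 {y : Fin (k+1) → ℝ | ∑ i, y i = ((k+1 : ℕ) : ℝ) * η} :=
          measure_union_le _ _
      _ = P2 Cᶜ := by rw [hZ0, add_zero]
  have hBcD : Bᶜ ⊆ D := by
    intro y hy
    rw [Set.mem_compl_iff, hBdef, Set.mem_setOf_eq, not_le, zero_add] at hy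
    rw [hDdef, Set.mem_setOf_eq, show (2 : ℝ) * η - η = η by ring]
    exact le_of_lt hy
  have chain : P0 C + P2 C' ≤ P0 B + P2 D := by
    calc P0 C + P2 C' ≤ P0 C + P2 Cᶜ := add_le_add le_rfl hC'le
      _ = (P0 (C ∩ B) + P0 (C \ B)) + (P2 (Cᶜ ∩ B) + P2 (Cᶜ \ B)) := by rw [e1, e2]
      _ ≤ (P0 (C ∩ B) + P2 (C \ B)) + (P0 (Cᶜ ∩ B) + P2 (Cᶜ \ B)) :=
          add_le_add (by gcongr) (by gcongr)
      _ = (P0 (B ∩ C) + P0 (B \ C)) + (P2 (Bᶜ ∩ C) + P2 (Bᶜ \ C)) := by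
          rw [i1, i2, i3, i4]; ring
      _ = P0 B + P2 Bᶜ := by rw [e3, e4]
      _ ≤ P0 B + P2 D := add_le_add le_rfl (measure_mono hBcD)
  have hlt : P0 B + P2 D < P0 C + P2 C' := ENNReal.add_lt_add h1 h2
  exact absurd (lt_of_lt_of_le hlt chain) (lt_irrefl _)
end

section
/- Let λ > 0 be a root of the equation −(1/λ) log(1 − λ²/(4(exp(λ) − 1 − λ))) = 1, let L(x) = max{−1, min{1, x}}, let a = 2(exp(λ) − 1 − λ)/λ², and define the estimator θ̂_α(θ₀) = θ₀ + (λ/(n α)) Σ_{i=1}^n L((α/λ)(Y_i − θ₀)). Assume v ≤ v₀ and |m − θ₀| ≤ δ₀, where v₀ > 0 and δ₀ ≥ 0 are known prior bounds. Then for every α > 0 and ε ∈ (0,1), with probability at least 1 − 2ε, |θ̂_α(θ₀) − m| ≤ a α (v₀ + δ₀²)/2 + log(ε⁻¹)/(n α). In particular, for α = √(2 log(ε⁻¹)/(a (v₀ + δ₀²) n)), with probability at least 1 − 2ε, |θ̂_α(θ₀) − m| ≤ √(2 a (v₀ + δ₀²) log(ε⁻¹)/n). -/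
open MeasureTheory ProbabilityTheory

/-- The simple clipping function `L(x) = max {-1, min {1, x}}`. -/
noncomputable def clipL (x : ℝ) : ℝ := max (-1) (min 1 x)

lemma clipL_odd (x : ℝ) : clipL (-x) = -clipL x := by
  simp only [clipL, min_def, max_def]; split_ifs <;> linarith

lemma clipL_of_ge {x : ℝ} (h : 1 ≤ x) : clipL x = 1 := by
  simp only [clipL, min_def, max_def]; split_ifs <;> linarith

lemma clipL_of_le {x : ℝ} (h : x ≤ -1) : clipL x = -1 := by
  simp only [clipL, min_def, max_def]; split_ifs <;> linarith

lemma clipL_of_mem {x : ℝ} (h1 : -1 ≤ x) (h2 : x ≤ 1) : clipL x = x := by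
  simp only [clipL, min_def, max_def]; split_ifs <;> linarith

lemma continuous_clipL : Continuous clipL :=
  continuous_const.max (continuous_const.min continuous_id)

lemma summable_aux (x : ℝ) : Summable (fun n : ℕ => x ^ (n + 2) / (n + 2).factorial) := by
  have := Real.summable_pow_div_factorial x
  exact (summable_nat_add_iff 2).2 this

lemma exp_peel (x : ℝ) : Real.exp x = 1 + x + ∑' n : ℕ, x ^ (n + 2) / (n + 2).factorial := by
  have h := Real.exp_eq_exp_ℝ
  have hs := Real.summable_pow_div_factorial x
  have h0 : Real.exp x = ∑' n : ℕ, x ^ n / n.factorial := by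
    rw [Real.exp_eq_exp_ℝ, NormedSpace.exp_eq_tsum_div]
  rw [h0, Summable.tsum_eq_zero_add hs, Summable.tsum_eq_zero_add ((summable_nat_add_iff 1).2 hs)]
  norm_num
  ring

lemma quad_le_exp {x : ℝ} (hx : 0 ≤ x) : 1 + x + x ^ 2 / 2 ≤ Real.exp x := by
  rw [exp_peel]
  have h0 : x ^ (0 + 2) / (0 + 2).factorial ≤ ∑' n : ℕ, x ^ (n + 2) / (n + 2).factorial :=
    Summable.le_tsum (summable_aux x) 0 (fun i _ => by positivity)
  norm_num at h0
  linarith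

lemma ratio_mono {t s : ℝ} (h0 : 0 ≤ t) (hts : t ≤ s) :
    s ^ 2 * (Real.exp t - 1 - t) ≤ t ^ 2 * (Real.exp s - 1 - s) := by
  have ht : Real.exp t - 1 - t = ∑' n : ℕ, t ^ (n + 2) / (n + 2).factorial := by
    rw [exp_peel t]; ring
  have hs : Real.exp s - 1 - s = ∑' n : ℕ, s ^ (n + 2) / (n + 2).factorial := by
    rw [exp_peel s]; ring
  rw [ht, hs, ← tsum_mul_left, ← tsum_mul_left]
  refine Summable.tsum_le_tsum ?_ ((summable_aux t).mul_left _) ((summable_aux s).mul_left _)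
  intro n
  rw [mul_div_assoc', mul_div_assoc', div_le_div_iff_of_pos_right (by positivity)]
  have h1 : t ^ n ≤ s ^ n := pow_le_pow_left₀ h0 hts n
  calc s ^ 2 * t ^ (n + 2) = (s ^ 2 * t ^ 2) * t ^ n := by ring
    _ ≤ (s ^ 2 * t ^ 2) * s ^ n := by
        exact mul_le_mul_of_nonneg_left h1 (by positivity)
    _ = t ^ 2 * s ^ (n + 2) := by ring

lemma exp_neg_quad {t : ℝ} (ht : t ≤ 0) : Real.exp t ≤ 1 + t + t ^ 2 / 2 := by
  set F : ℝ → ℝ := fun u => (1 - u + u ^ 2 / 2) * Real.exp u with hF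
  have hder : ∀ u : ℝ, HasDerivAt F (u ^ 2 / 2 * Real.exp u) u := by
    intro u
    have h1 : HasDerivAt (fun u : ℝ => 1 - u + u ^ 2 / 2) (-1 + u) u := by
      have := ((hasDerivAt_id u).pow 2).div_const 2
      have h2 := ((hasDerivAt_const u (1:ℝ)).sub (hasDerivAt_id u)).add this
      simp at h2; exact h2
    have : HasDerivAt (fun u : ℝ => (1 - u + u ^ 2 / 2) * Real.exp u)
        ((-1 + u) * Real.exp u + (1 - u + u ^ 2 / 2) * Real.exp u) u := h1.mul (Real.hasDerivAt_exp u)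
    convert this using 1; ring
  have hmono : MonotoneOn F (Set.Ici (0:ℝ)) := by
    apply monotoneOn_of_deriv_nonneg (convex_Ici 0)
      (Continuous.continuousOn (by continuity))
      (fun x _ => (hder x).differentiableAt.differentiableWithinAt)
    intro x hx
    rw [(hder x).deriv]
    positivity
  have h1 : F 0 ≤ F (-t) := hmono (Set.mem_Ici.2 le_rfl) (Set.mem_Ici.2 (by linarith)) (by linarith)
  have hF0 : F 0 = 1 := by simp [hF]
  have hFt : F (-t) = (1 + t + t ^ 2 / 2) * Real.exp (-t) := by
    simp only [hF]; ring_nf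
  rw [hF0, hFt] at h1
  have hme : Real.exp (-t) * Real.exp t = 1 := by
    rw [← Real.exp_add]; simp
  nlinarith [Real.exp_pos t, mul_le_mul_of_nonneg_right h1 (Real.exp_pos t).le]

lemma key_ineq {lam : ℝ} (hlam : 0 < lam)
    (hroot : -(1 / lam) * Real.log (1 - lam ^ 2 / (4 * (Real.exp lam - 1 - lam))) = 1) (t : ℝ) :
    Real.exp (lam * clipL (t / lam)) ≤ 1 + t + ((Real.exp lam - 1 - lam) / lam ^ 2) * t ^ 2 := by
  set D : ℝ := Real.exp lam - 1 - lam with hDdef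
  have hD : lam ^ 2 / 2 ≤ D := by
    have := quad_le_exp hlam.le
    simp only [hDdef]; linarith
  have hDpos : 0 < D := lt_of_lt_of_le (by positivity) hD
  set A : ℝ := D / lam ^ 2 with hAdef
  have hA : 0 < A := by positivity
  have hA2 : 1 / 2 ≤ A := by
    rw [hAdef, le_div_iff₀ (by positivity)]; linarith
  have hAl : A * lam ^ 2 = D := div_mul_cancel₀ _ (by positivity)
  have hexp : Real.exp (-lam) = 1 - 1 / (4 * A) := by
    have hX : 1 - lam ^ 2 / (4 * D) = 1 - 1 / (4 * A) := by
      rw [hAdef]; field_simp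
    have hXpos : (0:ℝ) < 1 - lam ^ 2 / (4 * D) := by
      have : lam ^ 2 / (4 * D) ≤ lam ^ 2 / (4 * (lam ^ 2 / 2)) :=
        div_le_div_of_nonneg_left (by positivity) (by positivity) (by linarith)
      have h2 : lam ^ 2 / (4 * (lam ^ 2 / 2)) = 1 / 2 := by
        field_simp; ring
      rw [h2] at this; linarith
    have hlog : Real.log (1 - lam ^ 2 / (4 * D)) = -lam := by
      have hl := hroot
      field_simp at hl
      have hX2 : 1 - lam ^ 2 / (4 * D) = (4 * D - lam ^ 2) / (4 * D) := by field_simp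
      rw [hX2]; linarith
    rw [← hlog, Real.exp_log hXpos, hX]
  rcases le_total lam t with h | h
  · -- t ≥ lam : clip = 1
    have h1 : (1:ℝ) ≤ t / lam := (one_le_div hlam).2 h
    rw [clipL_of_ge h1, mul_one]
    have he : Real.exp lam = 1 + lam + A * lam ^ 2 := by rw [hAl, hDdef]; ring
    nlinarith [mul_nonneg (sub_nonneg.2 h) (mul_nonneg hA.le (by linarith : (0:ℝ) ≤ t + lam))]
  · rcases le_total t (-lam) with h2 | h2
    · -- t ≤ -lam : clip = -1
      have h1 : t / lam ≤ -1 := by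
        rw [div_le_iff₀ hlam]; linarith
      rw [clipL_of_le h1, mul_neg_one, hexp]
      have h4 : 1 / (4 * A) * (4 * A) = 1 := by field_simp
      nlinarith [sq_nonneg (2 * A * t + 1), hA, h4, mul_pos hA hA]
    · -- -lam ≤ t ≤ lam
      have hm : clipL (t / lam) = t / lam := by
        apply clipL_of_mem
        · rw [neg_le, ← neg_div, div_le_one hlam]; linarith
        · rw [div_le_one hlam]; exact h
      rw [hm, mul_div_cancel₀ _ hlam.ne']
      rcases le_total 0 t with h3 | h3
      · have hr := ratio_mono h3 h
        have hl2 : (0:ℝ) < lam ^ 2 := by positivity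
        nlinarith [hr, hAl, hl2]
      · have := exp_neg_quad h3
        nlinarith [sq_nonneg t]

lemma chernoff_aux {Ω : Type*} [MeasurableSpace Ω] (P : Measure Ω) [IsProbabilityMeasure P]
    (n : ℕ) (Y : Fin n → Ω → ℝ) (hYmeas : ∀ i, Measurable (Y i))
    (μ : Measure ℝ)
    (hindep : iIndepFun Y P)
    (hid : ∀ i, Measure.map (Y i) P = μ)
    (ψ : ℝ → ℝ) (hψm : Measurable ψ) (C : ℝ) (hψC : ∀ y, ψ y ≤ C)
    (b : ℝ) (hb : ∫ y, Real.exp (ψ y) ∂μ ≤ Real.exp b)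
    (ε : ℝ) (hε : 0 < ε) :
    P {ω | n * b + Real.log ε⁻¹ ≤ ∑ i, ψ (Y i ω)} ≤ ENNReal.ofReal ε := by
  classical
  set Z : Fin n → Ω → ℝ := fun i ω => ψ (Y i ω) with hZ
  have hZmeas : ∀ i, Measurable (Z i) := fun i => hψm.comp (hYmeas i)
  have hZindep : iIndepFun Z P :=
    hindep.comp (fun _ => ψ) (fun _ => hψm)
  have hmgf : mgf (∑ i, Z i) P 1 = ∏ i : Fin n, mgf (Z i) P 1 :=
    hZindep.mgf_sum hZmeas Finset.univ
  have hone : ∀ i : Fin n, mgf (Z i) P 1 = ∫ y, Real.exp (ψ y) ∂μ := by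
    intro i
    rw [mgf, ← hid i, integral_map (hYmeas i).aemeasurable]
    · simp [hZ]
    · exact (Measurable.exp (by fun_prop)).aestronglyMeasurable
  have hSmeas : Measurable (fun ω => ∑ i, ψ (Y i ω)) :=
    Finset.measurable_sum Finset.univ (fun i _ => hψm.comp (hYmeas i))
  have hSbound : ∀ ω, ∑ i, ψ (Y i ω) ≤ n * C := by
    intro ω
    calc ∑ i : Fin n, ψ (Y i ω) ≤ ∑ _i : Fin n, C :=
          Finset.sum_le_sum (fun i _ => hψC _)
      _ = n * C := by simp [mul_comm]
  have hint : Integrable (fun ω => Real.exp (∑ i, ψ (Y i ω))) P := by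
    refine Integrable.mono' (integrable_const (Real.exp (n * C)))
      (hSmeas.exp).aestronglyMeasurable ?_
    filter_upwards with ω
    rw [Real.norm_eq_abs, abs_of_pos (Real.exp_pos _), Real.exp_le_exp]
    exact hSbound ω
  have hintegral : ∫ ω, Real.exp (∑ i, ψ (Y i ω)) ∂P ≤ Real.exp (n * b) := by
    have h1 : ∫ ω, Real.exp (∑ i, ψ (Y i ω)) ∂P = mgf (∑ i, Z i) P 1 := by
      rw [mgf]
      congr 1 with ω
      simp [hZ, Finset.sum_apply]
    rw [h1, hmgf]
    calc ∏ i : Fin n, mgf (Z i) P 1 ≤ ∏ _i : Fin n, Real.exp b := by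
          apply Finset.prod_le_prod
          · intro i _
            rw [hone i]
            exact integral_nonneg (fun y => (Real.exp_pos _).le)
          · intro i _
            rw [hone i]; exact hb
      _ = Real.exp (n * b) := by
          rw [Finset.prod_const, ← Real.exp_nat_mul]
          simp
  set c : ℝ := Real.exp (n * b + Real.log ε⁻¹) with hc
  have hcpos : 0 < c := Real.exp_pos _
  have hset : {ω | n * b + Real.log ε⁻¹ ≤ ∑ i, ψ (Y i ω)}
      = {ω | c ≤ Real.exp (∑ i, ψ (Y i ω))} := by
    ext ω; simp [hc, Real.exp_le_exp]
  have hmark := mul_meas_ge_le_integral_of_nonneg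
    (Filter.Eventually.of_forall (fun ω => (Real.exp_pos _).le) :
      0 ≤ᵐ[P] fun ω => Real.exp (∑ i, ψ (Y i ω))) hint c
  rw [hset]
  have htr : (P {ω | c ≤ Real.exp (∑ i, ψ (Y i ω))}).toReal ≤ ε := by
    have h2 : c * (P {ω | c ≤ Real.exp (∑ i, ψ (Y i ω))}).toReal ≤ Real.exp (n * b) :=
      le_trans hmark hintegral
    have h3 : (P {ω | c ≤ Real.exp (∑ i, ψ (Y i ω))}).toReal ≤ Real.exp (n * b) / c :=
      (le_div_iff₀ hcpos).2 (by linarith [h2])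
    refine h3.trans ?_
    rw [hc, ← Real.exp_sub]
    have : n * b - (n * b + Real.log ε⁻¹) = Real.log ε := by
      rw [Real.log_inv]; ring
    rw [this, Real.exp_log hε]
  rw [← ENNReal.ofReal_toReal (measure_ne_top P _)]
  exact ENNReal.ofReal_le_ofReal htr

lemma clipL_le_one (x : ℝ) : clipL x ≤ 1 :=
  max_le (by norm_num) (min_le_left 1 x)

lemma integrable_id' {μ : Measure ℝ} [IsProbabilityMeasure μ]
    (hL2 : Integrable (fun y => y ^ 2) μ) : Integrable (fun y : ℝ => y) μ := by
  refine Integrable.mono' ((integrable_const 1).add hL2)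
    measurable_id.aestronglyMeasurable ?_
  filter_upwards with y
  rw [Real.norm_eq_abs]
  simp only [Pi.add_apply]
  nlinarith [sq_nonneg (|y| - 1), sq_abs y]

lemma integral_quad (μ : Measure ℝ) [IsProbabilityMeasure μ]
    (hL2 : Integrable (fun y => y ^ 2) μ) (c0 c1 c2 : ℝ) :
    ∫ y, (c0 + c1 * y + c2 * y ^ 2) ∂μ
      = c0 + c1 * (∫ y, y ∂μ) + c2 * (∫ y, y ^ 2 ∂μ) := by
  have hL1 : Integrable (fun y : ℝ => y) μ := integrable_id' hL2
  have i1 : Integrable (fun y : ℝ => c0 + c1 * y) μ := by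
    simpa using (integrable_const c0).add (hL1.const_mul c1)
  rw [integral_add i1 (hL2.const_mul c2), integral_add (integrable_const c0) (hL1.const_mul c1),
    MeasureTheory.integral_const_mul, MeasureTheory.integral_const_mul, integral_const]
  simp

/-- The truncated mean estimator built from the simple clipping function:
`θ̂_α(θ₀) = θ₀ + (λ/(n α)) ∑ᵢ L ((α/λ) (Yᵢ - θ₀))`. -/
noncomputable def thetaHatClip (n : ℕ) (lam α θ₀ : ℝ) (Y : Fin n → ℝ) : ℝ :=
  θ₀ + (lam / (n * α)) * ∑ i, clipL ((α / lam) * (Y i - θ₀))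

lemma main_bound
    {Ω : Type*} [MeasurableSpace Ω] (P : Measure Ω) [IsProbabilityMeasure P]
    (n : ℕ) (hn : 0 < n) (Y : Fin n → Ω → ℝ) (hYmeas : ∀ i, Measurable (Y i))
    (μ : Measure ℝ) [IsProbabilityMeasure μ]
    (hindep : iIndepFun Y P)
    (hid : ∀ i, Measure.map (Y i) P = μ)
    (hL2 : Integrable (fun y => y ^ 2) μ)
    (m v : ℝ) (hm : m = ∫ y, y ∂μ) (hv : v = ∫ y, (y - m) ^ 2 ∂μ)
    (lam : ℝ) (hlam : 0 < lam)
    (hroot : -(1 / lam) * Real.log (1 - lam ^ 2 / (4 * (Real.exp lam - 1 - lam))) = 1)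
    (a : ℝ) (ha : a = 2 * (Real.exp lam - 1 - lam) / lam ^ 2)
    (v₀ δ₀ : ℝ) (hv₀ : 0 < v₀) (hδ₀ : 0 ≤ δ₀) (hvle : v ≤ v₀)
    (θ₀ : ℝ) (hθ₀ : |m - θ₀| ≤ δ₀)
    (α : ℝ) (hα : 0 < α) (ε : ℝ) (hε : ε ∈ Set.Ioo (0 : ℝ) 1) :
    ENNReal.ofReal (1 - 2 * ε) ≤
      P {ω | |thetaHatClip n lam α θ₀ (fun i => Y i ω) - m| ≤
        a * α * (v₀ + δ₀ ^ 2) / 2 + Real.log ε⁻¹ / (n * α)} := by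
  classical
  obtain ⟨hε0, hε1⟩ := hε
  set D : ℝ := Real.exp lam - 1 - lam with hDdef
  have hD : lam ^ 2 / 2 ≤ D := by
    have := quad_le_exp hlam.le
    simp only [hDdef]; linarith
  have hDpos : 0 < D := lt_of_lt_of_le (by positivity) hD
  set A : ℝ := D / lam ^ 2 with hAdef
  have hApos : 0 < A := by positivity
  have haA : a = 2 * A := by rw [ha, hAdef, hDdef]; ring
  set N : ℝ := (n : ℝ) with hNdef
  have hN : 0 < N := by simpa [hNdef] using (Nat.cast_pos.2 hn : (0:ℝ) < (n:ℝ))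
  set ℓ : ℝ := Real.log ε⁻¹ with hldef
  -- second moment facts
  set s2 : ℝ := ∫ y, y ^ 2 ∂μ with hs2
  have hveq : v = s2 - m ^ 2 := by
    rw [hv]
    have h1 : ∀ y : ℝ, (y - m) ^ 2 = m ^ 2 + (-2 * m) * y + 1 * y ^ 2 := by intro y; ring
    calc ∫ y, (y - m) ^ 2 ∂μ = ∫ y, (m ^ 2 + (-2 * m) * y + 1 * y ^ 2) ∂μ := by
          exact integral_congr_ae (Filter.Eventually.of_forall (fun y => h1 y))
      _ = m ^ 2 + (-2 * m) * (∫ y, y ∂μ) + 1 * s2 := integral_quad μ hL2 _ _ _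
      _ = s2 - m ^ 2 := by rw [← hm]; ring
  have hδsq : (m - θ₀) ^ 2 ≤ δ₀ ^ 2 := by
    have := sq_le_sq' (neg_le_of_abs_le hθ₀) (le_of_abs_le hθ₀)
    simpa using this
  -- tail bound for sign β
  have tail : ∀ β : ℝ, β ^ 2 = α ^ 2 →
      P {ω | N * (β * (m - θ₀) + A * α ^ 2 * (v₀ + δ₀ ^ 2)) + ℓ
          ≤ ∑ i, lam * clipL ((β / lam) * (Y i ω - θ₀))} ≤ ENNReal.ofReal ε := by
    intro β hβ
    set ψ : ℝ → ℝ := fun y => lam * clipL ((β / lam) * (y - θ₀)) with hψdef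
    have hψm : Measurable ψ := by
      apply Measurable.const_mul
      exact continuous_clipL.measurable.comp (by fun_prop)
    have hψC : ∀ y, ψ y ≤ lam := by
      intro y
      have := clipL_le_one ((β / lam) * (y - θ₀))
      calc ψ y ≤ lam * 1 := mul_le_mul_of_nonneg_left this hlam.le
        _ = lam := mul_one lam
    have hkey : ∀ y : ℝ, Real.exp (ψ y)
        ≤ 1 + β * (y - θ₀) + A * α ^ 2 * (y - θ₀) ^ 2 := by
      intro y
      have h1 : (β / lam) * (y - θ₀) = (β * (y - θ₀)) / lam := by ring
      have h2 := key_ineq hlam hroot (β * (y - θ₀))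
      rw [hψdef]
      simp only [h1]
      refine h2.trans (le_of_eq ?_)
      have : (β * (y - θ₀)) ^ 2 = α ^ 2 * (y - θ₀) ^ 2 := by
        rw [mul_pow, hβ]
      rw [this]; ring
    have hintexp : Integrable (fun y => Real.exp (ψ y)) μ := by
      refine Integrable.mono' (integrable_const (Real.exp lam))
        (hψm.exp).aestronglyMeasurable ?_
      filter_upwards with y
      rw [Real.norm_eq_abs, abs_of_pos (Real.exp_pos _), Real.exp_le_exp]
      exact hψC y
    have hquadint : Integrable (fun y => 1 + β * (y - θ₀) + A * α ^ 2 * (y - θ₀) ^ 2) μ := by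
      have h1 : ∀ y : ℝ, 1 + β * (y - θ₀) + A * α ^ 2 * (y - θ₀) ^ 2
          = (1 - β * θ₀ + A * α ^ 2 * θ₀ ^ 2) + (β - 2 * A * α ^ 2 * θ₀) * y
            + (A * α ^ 2) * y ^ 2 := by intro y; ring
      have hL1 : Integrable (fun y : ℝ => y) μ := integrable_id' hL2
      refine Integrable.congr ?_ (Filter.Eventually.of_forall (fun y => (h1 y).symm))
      exact ((integrable_const _).add (hL1.const_mul _)).add (hL2.const_mul _)
    have hmom : ∫ y, Real.exp (ψ y) ∂μ
        ≤ Real.exp (β * (m - θ₀) + A * α ^ 2 * (v₀ + δ₀ ^ 2)) := by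
      have h1 : ∫ y, Real.exp (ψ y) ∂μ
          ≤ ∫ y, (1 + β * (y - θ₀) + A * α ^ 2 * (y - θ₀) ^ 2) ∂μ :=
        integral_mono hintexp hquadint hkey
      have h2 : ∫ y, (1 + β * (y - θ₀) + A * α ^ 2 * (y - θ₀) ^ 2) ∂μ
          = 1 + β * (m - θ₀) + A * α ^ 2 * (v + (m - θ₀) ^ 2) := by
        have h1' : ∀ y : ℝ, 1 + β * (y - θ₀) + A * α ^ 2 * (y - θ₀) ^ 2
            = (1 - β * θ₀ + A * α ^ 2 * θ₀ ^ 2) + (β - 2 * A * α ^ 2 * θ₀) * y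
              + (A * α ^ 2) * y ^ 2 := by intro y; ring
        calc ∫ y, (1 + β * (y - θ₀) + A * α ^ 2 * (y - θ₀) ^ 2) ∂μ
            = ∫ y, ((1 - β * θ₀ + A * α ^ 2 * θ₀ ^ 2) + (β - 2 * A * α ^ 2 * θ₀) * y
              + (A * α ^ 2) * y ^ 2) ∂μ :=
              integral_congr_ae (Filter.Eventually.of_forall (fun y => h1' y))
          _ = (1 - β * θ₀ + A * α ^ 2 * θ₀ ^ 2) + (β - 2 * A * α ^ 2 * θ₀) * (∫ y, y ∂μ)
              + (A * α ^ 2) * s2 := integral_quad μ hL2 _ _ _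
          _ = 1 + β * (m - θ₀) + A * α ^ 2 * (v + (m - θ₀) ^ 2) := by
              rw [← hm, hveq]; ring
      have h3 : 1 + β * (m - θ₀) + A * α ^ 2 * (v + (m - θ₀) ^ 2)
          ≤ 1 + (β * (m - θ₀) + A * α ^ 2 * (v₀ + δ₀ ^ 2)) := by
        have : v + (m - θ₀) ^ 2 ≤ v₀ + δ₀ ^ 2 := by linarith
        nlinarith [mul_pos hApos (mul_pos hα hα), sq_nonneg α]
      have h4 := Real.add_one_le_exp (β * (m - θ₀) + A * α ^ 2 * (v₀ + δ₀ ^ 2))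
      linarith
    have := chernoff_aux P n Y hYmeas μ hindep hid ψ hψm lam hψC _ hmom ε hε0
    simpa [hψdef, hNdef, hldef] using this
  -- events
  set B : ℝ := a * α * (v₀ + δ₀ ^ 2) / 2 + ℓ / (N * α) with hBdef
  set T : Ω → ℝ := fun ω => ∑ i, clipL ((α / lam) * (Y i ω - θ₀)) with hTdef
  set F : Ω → ℝ := fun ω => thetaHatClip n lam α θ₀ (fun i => Y i ω) with hFdef
  have hθF : ∀ ω, F ω = θ₀ + (lam / (N * α)) * T ω := fun ω => rfl
  have hNα : 0 < N * α := mul_pos hN hα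
  have hTmeas : Measurable T := by
    apply Finset.measurable_sum
    intro i _
    exact continuous_clipL.measurable.comp (by fun_prop)
  have hFmeas : Measurable F := by
    rw [hFdef]
    have : (fun ω => thetaHatClip n lam α θ₀ (fun i => Y i ω))
        = fun ω => θ₀ + (lam / (N * α)) * T ω := funext hθF
    rw [this]
    fun_prop
  have hmeasgood : MeasurableSet {ω | |F ω - m| ≤ B} :=
    measurableSet_le ((hFmeas.sub measurable_const).abs) measurable_const
  show ENNReal.ofReal (1 - 2 * ε) ≤ P {ω | |F ω - m| ≤ B}
  set Ep := {ω | N * (α * (m - θ₀) + A * α ^ 2 * (v₀ + δ₀ ^ 2)) + ℓ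
      ≤ ∑ i, lam * clipL ((α / lam) * (Y i ω - θ₀))} with hEpdef
  set Em := {ω | N * ((-α) * (m - θ₀) + A * α ^ 2 * (v₀ + δ₀ ^ 2)) + ℓ
      ≤ ∑ i, lam * clipL (((-α) / lam) * (Y i ω - θ₀))} with hEmdef
  have htailp : P Ep ≤ ENNReal.ofReal ε := tail α rfl
  have htailm : P Em ≤ ENNReal.ofReal ε := tail (-α) (by ring)
  have hsub : {ω | |F ω - m| ≤ B}ᶜ ⊆ Ep ∪ Em := by
    intro ω hω
    have hω' : B < |F ω - m| := not_le.1 hω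
    have hsump : ∑ i, lam * clipL ((α / lam) * (Y i ω - θ₀)) = lam * T ω := by
      rw [hTdef, Finset.mul_sum]
    have hsumm : ∑ i, lam * clipL (((-α) / lam) * (Y i ω - θ₀)) = -(lam * T ω) := by
      rw [hTdef, Finset.mul_sum, ← Finset.sum_neg_distrib]
      apply Finset.sum_congr rfl
      intro i _
      rw [show ((-α) / lam) * (Y i ω - θ₀) = -((α / lam) * (Y i ω - θ₀)) by ring, clipL_odd]
      ring
    have hlamT : lam * T ω = (N * α) * (F ω - θ₀) := by
      rw [hθF ω]
      field_simp
      ring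
    rcases lt_abs.1 hω' with hcase | hcase
    · left
      simp only [hEpdef, Set.mem_setOf_eq, hsump]
      have h8 : N * (α * (m - θ₀) + A * α ^ 2 * (v₀ + δ₀ ^ 2)) + ℓ
          = (N * α) * (B + (m - θ₀)) := by
        rw [hBdef, haA]
        field_simp
        ring
      have h6 : (N * α) * (B + (m - θ₀)) ≤ (N * α) * ((F ω - m) + (m - θ₀)) :=
        mul_le_mul_of_nonneg_left (by linarith) hNα.le
      have h7 : (F ω - m) + (m - θ₀) = F ω - θ₀ := by ring
      rw [h7] at h6
      linarith [hlamT]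
    · right
      simp only [hEmdef, Set.mem_setOf_eq, hsumm]
      have h8 : N * ((-α) * (m - θ₀) + A * α ^ 2 * (v₀ + δ₀ ^ 2)) + ℓ
          = (N * α) * (B - (m - θ₀)) := by
        rw [hBdef, haA]
        field_simp
        ring
      have h6 : (N * α) * (B - (m - θ₀)) ≤ (N * α) * ((m - F ω) - (m - θ₀)) :=
        mul_le_mul_of_nonneg_left (by linarith) hNα.le
      have h7 : (m - F ω) - (m - θ₀) = -(F ω - θ₀) := by ring
      rw [h7] at h6
      linarith [hlamT]
  have hcompl : P {ω | |F ω - m| ≤ B}ᶜ ≤ ENNReal.ofReal (2 * ε) := by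
    refine le_trans (measure_mono hsub) (le_trans (measure_union_le _ _) ?_)
    calc P Ep + P Em ≤ ENNReal.ofReal ε + ENNReal.ofReal ε := add_le_add htailp htailm
      _ = ENNReal.ofReal (2 * ε) := by
          rw [← ENNReal.ofReal_add hε0.le hε0.le]; norm_num [two_mul]
  have hgood : P {ω | |F ω - m| ≤ B} = 1 - P {ω | |F ω - m| ≤ B}ᶜ := by
    have h := prob_compl_eq_one_sub (μ := P) hmeasgood.compl
    rw [compl_compl] at h
    exact h
  calc ENNReal.ofReal (1 - 2 * ε) = 1 - ENNReal.ofReal (2 * ε) := by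
        rw [ENNReal.ofReal_sub _ (by positivity), ENNReal.ofReal_one]
    _ ≤ 1 - P {ω | |F ω - m| ≤ B}ᶜ := tsub_le_tsub_left hcompl 1
    _ = P {ω | |F ω - m| ≤ B} := hgood.symm

/-- If `λ > 0` is a root of `-(1/λ) log (1 - λ²/(4 (exp λ - 1 - λ))) = 1`,
`a = 2 (exp λ - 1 - λ)/λ²`, `v ≤ v₀` and `|m - θ₀| ≤ δ₀`, then for every `α > 0` and
`ε ∈ (0,1)`, with probability at least `1 - 2ε`,
`|θ̂_α(θ₀) - m| ≤ a α (v₀ + δ₀²)/2 + log (ε⁻¹)/(n α)`; in particular, for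
`α = √(2 log (ε⁻¹)/(a (v₀ + δ₀²) n))`, with probability at least `1 - 2ε`,
`|θ̂_α(θ₀) - m| ≤ √(2 a (v₀ + δ₀²) log (ε⁻¹)/n)`. -/
theorem clipped_mean_deviation
    {Ω : Type*} [MeasurableSpace Ω] (P : Measure Ω) [IsProbabilityMeasure P]
    (n : ℕ) (hn : 0 < n) (Y : Fin n → Ω → ℝ) (hYmeas : ∀ i, Measurable (Y i))
    (μ : Measure ℝ) [IsProbabilityMeasure μ]
    (hindep : iIndepFun Y P)
    (hid : ∀ i, Measure.map (Y i) P = μ)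
    (hL2 : Integrable (fun y => y ^ 2) μ)
    (m v : ℝ) (hm : m = ∫ y, y ∂μ) (hv : v = ∫ y, (y - m) ^ 2 ∂μ)
    (lam : ℝ) (hlam : 0 < lam)
    (hroot : -(1 / lam) * Real.log (1 - lam ^ 2 / (4 * (Real.exp lam - 1 - lam))) = 1)
    (a : ℝ) (ha : a = 2 * (Real.exp lam - 1 - lam) / lam ^ 2)
    (v₀ δ₀ : ℝ) (hv₀ : 0 < v₀) (hδ₀ : 0 ≤ δ₀) (hvle : v ≤ v₀)
    (θ₀ : ℝ) (hθ₀ : |m - θ₀| ≤ δ₀)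
    (α : ℝ) (hα : 0 < α) (ε : ℝ) (hε : ε ∈ Set.Ioo (0 : ℝ) 1) :
    ENNReal.ofReal (1 - 2 * ε) ≤
      P {ω | |thetaHatClip n lam α θ₀ (fun i => Y i ω) - m| ≤
        a * α * (v₀ + δ₀ ^ 2) / 2 + Real.log ε⁻¹ / (n * α)} ∧
    ENNReal.ofReal (1 - 2 * ε) ≤
      P {ω | |thetaHatClip n lam (Real.sqrt (2 * Real.log ε⁻¹ / (a * (v₀ + δ₀ ^ 2) * n))) θ₀
          (fun i => Y i ω) - m| ≤
        Real.sqrt (2 * a * (v₀ + δ₀ ^ 2) * Real.log ε⁻¹ / n)} := by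
  constructor
  · exact main_bound P n hn Y hYmeas μ hindep hid hL2 m v hm hv lam hlam hroot a ha
      v₀ δ₀ hv₀ hδ₀ hvle θ₀ hθ₀ α hα ε hε
  · set α' : ℝ := Real.sqrt (2 * Real.log ε⁻¹ / (a * (v₀ + δ₀ ^ 2) * n)) with hα'def
    have hDpos : 0 < Real.exp lam - 1 - lam := by
      nlinarith [Real.add_one_lt_exp (ne_of_gt hlam)]
    have hapos : 0 < a := by rw [ha]; positivity
    have hsum : 0 < v₀ + δ₀ ^ 2 := by positivity
    have hℓ : 0 < Real.log ε⁻¹ := Real.log_pos (by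
      rw [lt_inv_comm₀ (by norm_num) hε.1]
      simpa using hε.2)
    have hNpos : (0:ℝ) < n := by exact_mod_cast hn
    have harg : 0 < 2 * Real.log ε⁻¹ / (a * (v₀ + δ₀ ^ 2) * n) := by positivity
    have hα' : 0 < α' := Real.sqrt_pos.2 harg
    have hsq : α' ^ 2 = 2 * Real.log ε⁻¹ / (a * (v₀ + δ₀ ^ 2) * n) := Real.sq_sqrt harg.le
    have heq : a * α' * (v₀ + δ₀ ^ 2) / 2 + Real.log ε⁻¹ / (n * α')
        = Real.sqrt (2 * a * (v₀ + δ₀ ^ 2) * Real.log ε⁻¹ / n) := by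
      set s : ℝ := Real.sqrt (2 * a * (v₀ + δ₀ ^ 2) * Real.log ε⁻¹ / n) with hs
      have hsα : s * α' = 2 * Real.log ε⁻¹ / n := by
        rw [hs, hα'def, ← Real.sqrt_mul (by positivity)]
        rw [show (2 * a * (v₀ + δ₀ ^ 2) * Real.log ε⁻¹ / n)
            * (2 * Real.log ε⁻¹ / (a * (v₀ + δ₀ ^ 2) * n))
            = (2 * Real.log ε⁻¹ / n) ^ 2 by field_simp]
        exact Real.sqrt_sq (by positivity)
      apply mul_right_cancel₀ hα'.ne'
      have expand : (a * α' * (v₀ + δ₀ ^ 2) / 2 + Real.log ε⁻¹ / (↑n * α')) * α'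
          = a * (v₀ + δ₀ ^ 2) / 2 * α' ^ 2 + Real.log ε⁻¹ / n := by
        field_simp
      rw [expand, hsq, hsα]
      field_simp
      ring
    have hmain := main_bound P n hn Y hYmeas μ hindep hid hL2 m v hm hv lam hlam hroot a ha
      v₀ δ₀ hv₀ hδ₀ hvle θ₀ hθ₀ α' hα' ε hε
    rw [heq] at hmain
    exact hmain
end
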